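/- Let Φ ∈ ℂ[C] be a nonzero polynomial of degree at most T with Φ(0) ≠ 0, such that Φ(C) = Ψ(C^r) for some polynomial Ψ and r ≥ 1, and suppose a ≠ 0 is a root of Φ of multiplicity m with r·m = deg Φ = T. Then Φ(C) = u·(C^r − a^r)^m for some u ∈ ℂ*. -/
import Mathlib

open Polynomial in
private lemma rootMultiplicity_pow_aux (p : ℂ[X]) (hp : p ≠ 0) (x : ℂ) (n : ℕ) :
    rootMultiplicity x (p ^ n) = n * rootMultiplicity x p := by
  induction n with
  | zero => simp [rootMultiplicity_eq_zero (by simp [IsRoot] : ¬ IsRoot (1 : ℂ[X]) x)]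
  | succ n ih =>
      rw [pow_succ, rootMultiplicity_mul (mul_ne_zero (pow_ne_zero _ hp) hp), ih]
      ring

open Polynomial in
/-- If Φ(0) ≠ 0, Φ(C) = Ψ(C^r), and a ≠ 0 is a root of Φ of multiplicity m with
    deg Φ = r·m, then Φ(C) = u (C^r - a^r)^m for some u ≠ 0. -/
theorem poly_eq_pow_binomial (T r m : ℕ) (hr : 1 ≤ r)
    (Φ Ψ : ℂ[X]) (hΦ0 : Φ ≠ 0) (h0 : Φ.eval 0 ≠ 0)
    (hcomp : Φ = Ψ.comp (X ^ r))
    (a : ℂ) (ha : a ≠ 0) (hroot : Φ.eval a = 0)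
    (hmult : rootMultiplicity a Φ = m)
    (hdeg : Φ.natDegree = r * m) (hT : Φ.natDegree = T) :
    ∃ u : ℂ, u ≠ 0 ∧ Φ = C u * (X ^ r - C (a ^ r)) ^ m := by
  classical
  have hΨ0 : Ψ ≠ 0 := by
    rintro rfl
    simp only [zero_comp] at hcomp
    exact hΦ0 hcomp
  have hΨdeg : Ψ.natDegree = m := by
    have h1 : Φ.natDegree = Ψ.natDegree * r := by
      rw [hcomp, natDegree_comp, natDegree_X_pow]
    rw [hdeg] at h1
    have := h1.symm.trans (Nat.mul_comm r m)
    exact Nat.eq_of_mul_eq_mul_right (by omega) this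
  set b : ℂ := a ^ r with hb
  have hbne : b ≠ 0 := pow_ne_zero _ ha
  have hΨroot : Ψ.eval b = 0 := by
    have := hroot
    rwa [hcomp, eval_comp, eval_pow, eval_X] at this
  set k := rootMultiplicity b Ψ with hk
  set Q := Ψ /ₘ (X - C b) ^ k with hQ
  have hfact : (X - C b) ^ k * Q = Ψ := pow_mul_divByMonic_rootMultiplicity_eq Ψ b
  have hQb : Q.eval b ≠ 0 := eval_divByMonic_pow_rootMultiplicity_ne_zero b hΨ0
  have hQ0 : Q ≠ 0 := fun h => hQb (by simp [h])
  have hΦfact : Φ = (X ^ r - C b) ^ k * Q.comp (X ^ r) := by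
    rw [hcomp, ← hfact]
    simp [mul_comp, pow_comp, sub_comp]
  have hbin0 : ((X : ℂ[X]) ^ r - C b) ≠ 0 := (monic_X_pow_sub_C b (by omega)).ne_zero
  have hQcomp0 : Q.comp ((X : ℂ[X]) ^ r) ≠ 0 := by
    intro h
    apply hQb
    have : (Q.comp ((X : ℂ[X]) ^ r)).eval a = 0 := by rw [h]; simp
    rwa [eval_comp, eval_pow, eval_X] at this
  -- multiplicity of a in X^r - C b is 1
  have hsep : Separable ((X : ℂ[X]) ^ r - C b) :=
    separable_X_pow_sub_C b (Nat.cast_ne_zero.mpr (by omega : r ≠ 0)) hbne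
  have hbinroot : IsRoot ((X : ℂ[X]) ^ r - C b) a := by simp [IsRoot, hb]
  have hm1 : rootMultiplicity a ((X : ℂ[X]) ^ r - C b) = 1 := by
    have hle := rootMultiplicity_le_one_of_separable hsep a
    have hge : 0 < rootMultiplicity a ((X : ℂ[X]) ^ r - C b) :=
      (rootMultiplicity_pos hbin0).mpr hbinroot
    omega
  -- compute rootMultiplicity a Φ
  have hmk : m = k := by
    rw [← hmult, hΦfact, rootMultiplicity_mul (mul_ne_zero (pow_ne_zero _ hbin0) hQcomp0),
      rootMultiplicity_pow_aux _ hbin0, hm1,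
      rootMultiplicity_eq_zero (by
        simp only [IsRoot, eval_comp, eval_pow, eval_X, ← hb]
        exact hQb)]
    ring
  -- degree of Q is 0
  have hQdeg : Q.natDegree = 0 := by
    have h1 : Ψ.natDegree = ((X - C b) ^ k).natDegree + Q.natDegree := by
      rw [← hfact, natDegree_mul (pow_ne_zero _ (X_sub_C_ne_zero b)) hQ0]
    rw [natDegree_pow, natDegree_X_sub_C, mul_one, hΨdeg, ← hmk] at h1
    omega
  have hQeq : Q = C (Q.coeff 0) := eq_C_of_natDegree_eq_zero hQdeg
  refine ⟨Q.coeff 0, ?_, ?_⟩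
  · intro h
    apply hQb
    rw [hQeq, h]; simp
  · rw [hΦfact, hQeq, hmk]
    simp [mul_comm, hb]
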